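/- Let (Ω, 𝓔) be a measurable space, H a separable complex Hilbert space, and X : Ω → Submodule ℂ H a map such that each X ω is a closed (hence complete) subspace of H. Let P ω denote the orthogonal projection of H onto X ω. Then the following are equivalent: (1) for every f ∈ H the map ω ↦ P ω f is measurable; (2) X is a random closed subspace, i.e. {ω | ((X ω : Set H) ∩ U).Nonempty} is measurable for every open U ⊆ H. -/

import Mathlib

open Metric Set Filter Topology

/-- A family of closed subspaces `X ω` of a separable complex Hilbert space is
a random closed subspace iff the orthogonal projections `P ω` (characterised as
nearest-point maps onto `X ω`) are measurable applied to every fixed vector. -/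
theorem random_closed_subspace_iff_projection_measurable
    {Ω : Type*} [MeasurableSpace Ω]
    {H : Type*} [NormedAddCommGroup H] [InnerProductSpace ℂ H] [CompleteSpace H]
    [SecondCountableTopology H] [MeasurableSpace H] [BorelSpace H]
    (X : Ω → Submodule ℂ H) (hXclosed : ∀ ω, IsClosed ((X ω : Set H)))
    (P : Ω → (H →L[ℂ] H))
    (hP : ∀ ω (f : H), P ω f ∈ X ω ∧ ∀ g ∈ X ω, ‖f - P ω f‖ ≤ ‖f - g‖) :
    (∀ f : H, Measurable fun ω => P ω f) ↔
      (∀ U : Set H, IsOpen U →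
        MeasurableSet {ω : Ω | ((X ω : Set H) ∩ U).Nonempty}) := by
  have hmem : ∀ ω f, P ω f ∈ X ω := fun ω f => (hP ω f).1
  have hmin : ∀ ω f g, g ∈ X ω → ‖f - P ω f‖ ≤ ‖f - g‖ := fun ω f g hg => (hP ω f).2 g hg
  haveI : Nonempty H := ⟨0⟩
  set q : ℕ → H := TopologicalSpace.denseSeq H with hqdef
  have hq : DenseRange q := TopologicalSpace.denseRange_denseSeq H
  constructor
  · -- projections measurable → hit sets measurable
    intro hmeas U hU
    have key : {ω : Ω | ((X ω : Set H) ∩ U).Nonempty}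
        = ⋃ (k : ℕ), ⋃ (r : ℚ), ⋃ (_ : 0 < (r : ℝ) ∧ Metric.ball (q k) (r : ℝ) ⊆ U),
            {ω : Ω | ‖q k - P ω (q k)‖ < (r : ℝ)} := by
      ext ω
      simp only [Set.mem_setOf_eq, Set.mem_iUnion]
      constructor
      · rintro ⟨x, hxX, hxU⟩
        obtain ⟨ε, hε, hball⟩ := Metric.isOpen_iff.mp hU x hxU
        obtain ⟨k, hk⟩ := hq.exists_dist_lt x (by positivity : (0:ℝ) < ε/3)
        obtain ⟨r, hr1, hr2⟩ := exists_rat_btwn (show ε/3 < ε/2 by linarith)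
        rw [dist_comm] at hk
        refine ⟨k, r, ⟨by linarith, ?_⟩, ?_⟩
        · intro y hy
          apply hball
          rw [Metric.mem_ball] at hy ⊢
          have := dist_triangle y (q k) x
          linarith
        · calc ‖q k - P ω (q k)‖ ≤ ‖q k - x‖ := hmin ω (q k) x hxX
            _ = dist (q k) x := (dist_eq_norm _ _).symm
            _ < r := by linarith
      · rintro ⟨k, r, ⟨hr, hball⟩, h⟩
        exact ⟨P ω (q k), hmem ω (q k),
          hball (by rwa [Metric.mem_ball, dist_comm, dist_eq_norm])⟩
    rw [key]
    refine MeasurableSet.iUnion fun k => MeasurableSet.iUnion fun r =>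
      MeasurableSet.iUnion fun _ => ?_
    exact measurableSet_lt ((measurable_const.sub (hmeas (q k))).norm) measurable_const
  · -- hit sets measurable → projections measurable
    intro hhit f
    set d : Ω → ℝ := fun ω => ‖f - P ω f‖ with hddef
    have hd_nonneg : ∀ ω, 0 ≤ d ω := fun ω => norm_nonneg _
    -- d is measurable
    have hd_meas : Measurable d := by
      apply measurable_of_Iio
      intro r
      have : d ⁻¹' Iio r = {ω : Ω | ((X ω : Set H) ∩ Metric.ball f r).Nonempty} := by
        ext ω
        simp only [mem_preimage, mem_Iio, Set.mem_setOf_eq]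
        constructor
        · intro h
          exact ⟨P ω f, hmem ω f, by rwa [Metric.mem_ball, dist_comm, dist_eq_norm]⟩
        · rintro ⟨x, hxX, hxB⟩
          rw [Metric.mem_ball, dist_comm, dist_eq_norm] at hxB
          exact lt_of_le_of_lt (hmin ω f x hxX) hxB
      rw [this]
      exact hhit _ Metric.isOpen_ball
    set ε : ℕ → ℝ := fun n => 1 / (n + 1) with hεdef
    have hε_pos : ∀ n, 0 < ε n := fun n => by positivity
    -- the approximating predicate
    set p : ℕ → Ω → ℕ → Prop := fun n ω k =>
      ∃ x ∈ X ω, ‖x - q k‖ < ε n ∧ ‖f - x‖ < d ω + ε n with hpdef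
    have hp_ex : ∀ n ω, ∃ k, p n ω k := by
      intro n ω
      obtain ⟨k, hk⟩ := hq.exists_dist_lt (P ω f) (hε_pos n)
      exact ⟨k, P ω f, hmem ω f, by rw [norm_sub_rev]; rwa [dist_comm, dist_eq_norm] at hk,
        lt_add_of_pos_right _ (hε_pos n)⟩
    have hp_meas : ∀ n k, MeasurableSet {ω : Ω | p n ω k} := by
      intro n k
      have : {ω : Ω | p n ω k} = ⋃ (r : ℚ),
          ({ω : Ω | (r : ℝ) - ε n < d ω} ∩
           {ω : Ω | ((X ω : Set H) ∩ (Metric.ball (q k) (ε n) ∩ Metric.ball f r)).Nonempty}) := by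
        ext ω
        simp only [Set.mem_setOf_eq, Set.mem_iUnion, Set.mem_inter_iff]
        constructor
        · rintro ⟨x, hxX, hx1, hx2⟩
          obtain ⟨r, hr1, hr2⟩ := exists_rat_btwn hx2
          refine ⟨r, by linarith, x, hxX, ?_, ?_⟩
          · rwa [Metric.mem_ball, dist_eq_norm]
          · rw [Metric.mem_ball, dist_comm, dist_eq_norm]; exact hr1
        · rintro ⟨r, hr, x, hxX, hx1, hx2⟩
          rw [Metric.mem_ball, dist_eq_norm] at hx1
          rw [Metric.mem_ball, dist_comm, dist_eq_norm] at hx2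
          exact ⟨x, hxX, hx1, by linarith⟩
      rw [this]
      refine MeasurableSet.iUnion fun r => MeasurableSet.inter ?_ ?_
      · exact measurableSet_lt measurable_const hd_meas
      · exact hhit _ (Metric.isOpen_ball.inter Metric.isOpen_ball)
    classical
    -- measurable selections
    set m : ℕ → Ω → ℕ := fun n ω => Nat.find (hp_ex n ω) with hmdef
    have hm_meas : ∀ n, Measurable (m n) := fun n => measurable_find (hp_ex n) (hp_meas n)
    set g : ℕ → Ω → H := fun n ω => q (m n ω) with hgdef
    have hg_meas : ∀ n, Measurable (g n) := fun n => measurable_from_top.comp (hm_meas n)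
    -- convergence g n ω → P ω f
    have hg_tendsto : ∀ ω, Tendsto (fun n => g n ω) atTop (𝓝 (P ω f)) := by
      intro ω
      rw [tendsto_iff_dist_tendsto_zero]
      have bound : ∀ n, dist (g n ω) (P ω f) ≤ ε n + Real.sqrt (2 * ε n * (2 * d ω + ε n)) := by
        intro n
        obtain ⟨x, hxX, hx1, hx2⟩ := Nat.find_spec (hp_ex n ω)
        have key : ‖x - P ω f‖ ≤ Real.sqrt (2 * ε n * (2 * d ω + ε n)) := by
          -- parallelogram law
          have hpar := parallelogram_law_with_norm ℂ (f - x) (f - P ω f)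
          set mid : H := ((2:ℂ)⁻¹) • (x + P ω f) with hmiddef
          have hmid_mem : mid ∈ X ω := Submodule.smul_mem _ _ (Submodule.add_mem _ hxX (hmem ω f))
          have hmid : (f - x) + (f - P ω f) = (2:ℂ) • (f - mid) := by
            rw [hmiddef, smul_sub, smul_smul]
            norm_num
            module
          have hnorm2 : ‖(f - x) + (f - P ω f)‖ = 2 * ‖f - mid‖ := by
            rw [hmid, norm_smul]
            simp
          have hdmid : d ω ≤ ‖f - mid‖ := hmin ω f mid hmid_mem
          have hsub : (f - x) - (f - P ω f) = P ω f - x := by abel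
          rw [hnorm2, hsub] at hpar
          have hsq : ‖x - P ω f‖ ^ 2 ≤ 2 * ε n * (2 * d ω + ε n) := by
            have h1 : ‖P ω f - x‖ = ‖x - P ω f‖ := norm_sub_rev _ _
            have h2 : ‖f - P ω f‖ = d ω := rfl
            have h3 : ‖f - x‖ ≤ d ω + ε n := le_of_lt hx2
            have h4 : 0 ≤ ‖f - x‖ := norm_nonneg _
            rw [h1, h2] at hpar
            rw [sq]
            nlinarith [mul_self_le_mul_self (hd_nonneg ω) hdmid,
              mul_self_le_mul_self h4 h3, hε_pos n, hd_nonneg ω]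
          calc ‖x - P ω f‖ = Real.sqrt (‖x - P ω f‖ ^ 2) :=
                (Real.sqrt_sq (norm_nonneg _)).symm
            _ ≤ Real.sqrt (2 * ε n * (2 * d ω + ε n)) := Real.sqrt_le_sqrt hsq
        calc dist (g n ω) (P ω f) ≤ dist (g n ω) x + dist x (P ω f) := dist_triangle _ _ _
          _ ≤ ε n + Real.sqrt (2 * ε n * (2 * d ω + ε n)) := by
              refine add_le_add ?_ ?_
              · rw [dist_comm, dist_eq_norm]
                exact le_of_lt hx1
              · rw [dist_eq_norm]; exact key
      have hε_tendsto : Tendsto ε atTop (𝓝 0) := tendsto_one_div_add_atTop_nhds_zero_nat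
      have hrhs : Tendsto (fun n => ε n + Real.sqrt (2 * ε n * (2 * d ω + ε n)))
          atTop (𝓝 0) := by
        have hc : Continuous fun e : ℝ => e + Real.sqrt (2 * e * (2 * d ω + e)) := by
          fun_prop
        have := (hc.tendsto 0).comp hε_tendsto
        simpa [Function.comp_def] using this
      exact squeeze_zero (fun n => dist_nonneg) bound hrhs
    exact measurable_of_tendsto_metrizable hg_meas
      (tendsto_pi_nhds.mpr hg_tendsto)
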